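/- Let μ and ν be probability measures on a measurable space (Ω, F). Then the total variation distance satisfies ‖μ − ν‖² ≤ 2 H(μ | ν), where H(μ | ν) is the Kullback–Leibler divergence of μ with respect to ν (set to +∞ if μ is not absolutely continuous with respect to ν). -/

import Mathlib

open MeasureTheory
open scoped ENNReal Classical

/-- Total variation distance: `sup_A |P(A) - Q(A)|`. -/
noncomputable def tvDist {Ω : Type*} [MeasurableSpace Ω] (P Q : Measure Ω) : ℝ :=
  ⨆ A ∈ {s : Set Ω | MeasurableSet s}, |(P A).toReal - (Q A).toReal|

/-- Kullback–Leibler divergence `H(μ|ν) = ∫ f ln f dν` with `f = dμ/dν` when `μ ≪ ν`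
(and the integrand is integrable), and `+∞` otherwise. -/

noncomputable def klDiv {Ω : Type*} [MeasurableSpace Ω] (μ ν : Measure Ω) : ℝ≥0∞ :=
  if μ ≪ ν ∧ Integrable (fun x => (μ.rnDeriv ν x).toReal * Real.log (μ.rnDeriv ν x).toReal) ν
  then ENNReal.ofReal
      (∫ x, (μ.rnDeriv ν x).toReal * Real.log (μ.rnDeriv ν x).toReal ∂ν)
  else ⊤

/-- derivative of the auxiliary function `h`. -/
lemma pinsker_hasDerivAt_h {x : ℝ} (hx : 0 < x) :
    HasDerivAt (fun y => (y+1)*Real.log y - 2*(y-1)) (Real.log x + 1/x - 1) x := by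
  have h1 : HasDerivAt (fun y : ℝ => (y+1)*Real.log y) (1 * Real.log x + (x+1) * x⁻¹) x :=
    ((hasDerivAt_id x).add_const 1).mul (Real.hasDerivAt_log hx.ne')
  have h2 : HasDerivAt (fun y : ℝ => 2*(y-1)) 2 x := by
    simpa using ((hasDerivAt_id x).sub_const 1).const_mul 2
  refine (h1.sub h2).congr_deriv ?_
  rw [add_mul, mul_inv_cancel₀ hx.ne']
  ring

lemma pinsker_h_key {x : ℝ} (hx : 0 < x) :
    (1 ≤ x → 0 ≤ (x+1)*Real.log x - 2*(x-1)) ∧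
    (x ≤ 1 → (x+1)*Real.log x - 2*(x-1) ≤ 0) := by
  set h : ℝ → ℝ := fun y => (y+1)*Real.log y - 2*(y-1) with hh
  have h1 : h 1 = 0 := by simp [hh]
  have hmono : MonotoneOn h (Set.Ioi (0:ℝ)) := by
    apply monotoneOn_of_deriv_nonneg (convex_Ioi 0)
    · intro y hy
      exact ((pinsker_hasDerivAt_h hy).continuousAt).continuousWithinAt
    · intro y hy
      rw [interior_Ioi] at hy
      exact (pinsker_hasDerivAt_h hy).differentiableAt.differentiableWithinAt
    · intro y hy
      rw [interior_Ioi] at hy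
      rw [(pinsker_hasDerivAt_h hy).deriv]
      have h2 : 1 - 1/y ≤ Real.log y := by
        simpa [one_div] using Real.one_sub_inv_le_log_of_pos hy
      linarith
  constructor
  · intro hx1
    have := hmono (Set.mem_Ioi.2 one_pos) (Set.mem_Ioi.2 hx) hx1
    rw [h1] at this
    exact this
  · intro hx1
    have := hmono (Set.mem_Ioi.2 hx) (Set.mem_Ioi.2 one_pos) hx1
    rw [h1] at this
    exact this

lemma pinsker_hasDerivAt_g {x : ℝ} (hx : 0 < x) :
    HasDerivAt (fun y => (2*y+4)*(y*Real.log y - y + 1) - 3*(y-1)^2)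
      (4*((x+1)*Real.log x - 2*(x-1))) x := by
  have h0 : HasDerivAt (fun y : ℝ => y * Real.log y) (Real.log x + 1) x :=
    Real.hasDerivAt_mul_log hx.ne'
  have h1 : HasDerivAt (fun y : ℝ => y*Real.log y - y + 1) (Real.log x + 1 - 1) x :=
    (h0.sub (hasDerivAt_id x)).add_const 1
  have h2 : HasDerivAt (fun y : ℝ => 2*y+4) 2 x := by
    simpa using ((hasDerivAt_id x).const_mul 2).add_const 4
  have h3 := h2.mul h1
  have h4 : HasDerivAt (fun y : ℝ => 3*(y-1)^2) (3*(2*(x-1))) x := by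
    simpa using (((hasDerivAt_id x).sub_const 1).pow 2).const_mul 3
  refine (h3.sub h4).congr_deriv ?_
  ring

/-- Key pointwise inequality behind Pinsker's inequality. -/
lemma pinsker_key_ineq {x : ℝ} (hx : 0 ≤ x) :
    3*(x-1)^2 ≤ (2*x+4)*(x*Real.log x - x + 1) := by
  rcases eq_or_lt_of_le hx with h0 | h0
  · simp [← h0]; norm_num
  set g : ℝ → ℝ := fun y => (2*y+4)*(y*Real.log y - y + 1) - 3*(y-1)^2 with hg
  have g1 : g 1 = 0 := by simp [hg]
  have goal : 0 ≤ g x := by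
    rcases le_total 1 x with hx1 | hx1
    · have hmono : MonotoneOn g (Set.Ici (1:ℝ)) := by
        apply monotoneOn_of_deriv_nonneg (convex_Ici 1)
        · intro y hy
          have hy0 : (0:ℝ) < y := lt_of_lt_of_le one_pos hy
          exact ((pinsker_hasDerivAt_g hy0).continuousAt).continuousWithinAt
        · intro y hy
          rw [interior_Ici] at hy
          exact (pinsker_hasDerivAt_g (lt_trans one_pos hy)).differentiableAt.differentiableWithinAt
        · intro y hy
          rw [interior_Ici] at hy
          have hy0 : (0:ℝ) < y := lt_trans one_pos hy
          rw [(pinsker_hasDerivAt_g hy0).deriv]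
          have := (pinsker_h_key hy0).1 hy.le
          linarith
      have := hmono (by simp) (Set.mem_Ici.2 hx1) hx1
      rw [g1] at this
      exact this
    · have hanti : AntitoneOn g (Set.Ioc (0:ℝ) 1) := by
        apply antitoneOn_of_deriv_nonpos (convex_Ioc 0 1)
        · intro y hy
          exact ((pinsker_hasDerivAt_g hy.1).continuousAt).continuousWithinAt
        · intro y hy
          rw [interior_Ioc] at hy
          exact (pinsker_hasDerivAt_g hy.1).differentiableAt.differentiableWithinAt
        · intro y hy
          rw [interior_Ioc] at hy
          rw [(pinsker_hasDerivAt_g hy.1).deriv]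
          have := (pinsker_h_key hy.1).2 hy.2.le
          linarith
      have := hanti (Set.mem_Ioc.2 ⟨h0, hx1⟩) (by simp) hx1
      rw [g1] at this
      exact this
  simp only [hg] at goal
  linarith

/-- AM–GM version of the key inequality. -/
lemma pinsker_pointwise {x L : ℝ} (hx : 0 ≤ x) (hL : 0 < L) :
    |x - 1| ≤ L*(2*x+4)/6 + (x*Real.log x - x + 1)/(2*L) := by
  have hk := pinsker_key_ineq hx
  have h24 : (0:ℝ) < 2*x+4 := by linarith
  have h1 : |x-1| ≤ L*(2*x+4)/6 + 3*(x-1)^2/(2*x+4)/(2*L) := by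
    rw [← sq_abs (x-1), ← sub_nonneg]
    set t := |x - 1| with ht
    have e : L*(2*x+4)/6 + 3*t^2/(2*x+4)/(2*L) - t
        = (L*(2*x+4) - 3*t)^2 / (6*(L*(2*x+4))) := by
      field_simp
      ring
    rw [e]
    positivity
  have ha : 3*(x-1)^2/(2*x+4) ≤ x*Real.log x - x + 1 := by
    rw [div_le_iff₀ h24]
    exact hk.trans_eq (mul_comm _ _)
  have hL2 : (0:ℝ) < 2*L := by linarith
  have h2 : 3*(x-1)^2/(2*x+4)/(2*L) ≤ (x*Real.log x - x + 1)/(2*L) := by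
    gcongr
  linarith

/-- Pinsker's inequality: `‖μ - ν‖² ≤ 2 H(μ|ν)`. -/
theorem stmt_14 {Ω : Type*} [MeasurableSpace Ω] (μ ν : Measure Ω)
    [IsProbabilityMeasure μ] [IsProbabilityMeasure ν] :
    ENNReal.ofReal (tvDist μ ν ^ 2) ≤ 2 * klDiv μ ν := by
  by_cases hc : μ ≪ ν ∧ Integrable
      (fun x => (μ.rnDeriv ν x).toReal * Real.log (μ.rnDeriv ν x).toReal) ν
  swap
  · rw [klDiv, if_neg hc, ENNReal.mul_top (by norm_num)]
    exact le_top
  obtain ⟨hμν, hint⟩ := hc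
  set f : Ω → ℝ := fun x => (μ.rnDeriv ν x).toReal with hf
  have hint' : Integrable (fun x => f x * Real.log (f x)) ν := hint
  have hf_nonneg : ∀ x, 0 ≤ f x := fun x => ENNReal.toReal_nonneg
  have hf_int : Integrable f ν := Measure.integrable_toReal_rnDeriv
  have hf_one : ∫ x, f x ∂ν = 1 := by
    rw [hf, Measure.integral_toReal_rnDeriv hμν]
    simp
  set I := ∫ x, f x * Real.log (f x) ∂ν with hI
  have hφ_nonneg : ∀ x, 0 ≤ f x * Real.log (f x) - f x + 1 := by
    intro x
    have hk := pinsker_key_ineq (hf_nonneg x)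
    nlinarith [sq_nonneg (f x - 1), hf_nonneg x]
  have hI_nonneg : 0 ≤ I := by
    have h0 : 0 ≤ ∫ x, (f x * Real.log (f x) - f x + 1) ∂ν :=
      integral_nonneg hφ_nonneg
    have hsub : Integrable (fun x => f x * Real.log (f x) - f x) ν := hint'.sub hf_int
    have e1 : ∫ x, (f x * Real.log (f x) - f x + 1) ∂ν
        = (∫ x, (f x * Real.log (f x) - f x) ∂ν) + ∫ x, (1:ℝ) ∂ν :=
      integral_add hsub (integrable_const 1)
    have e2 : ∫ x, (f x * Real.log (f x) - f x) ∂ν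
        = I - ∫ x, f x ∂ν := integral_sub hint' hf_int
    have e3 : ∫ x, (1:ℝ) ∂ν = 1 := by simp
    rw [e1, e2, e3, hf_one] at h0
    linarith
  set V := ∫ x, |f x - 1| ∂ν with hV
  have hV_int : Integrable (fun x => |f x - 1|) ν := (hf_int.sub (integrable_const 1)).abs
  have hV_nonneg : 0 ≤ V := integral_nonneg fun x => abs_nonneg _
  have hVle : ∀ L : ℝ, 0 < L → V ≤ L + I/(2*L) := by
    intro L hL
    have hpt : ∀ x, |f x - 1| ≤
        (L/3 - 1/(2*L)) * f x + (1/(2*L)) * (f x * Real.log (f x)) + (2*L/3 + 1/(2*L)) := by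
      intro x
      have h1 := pinsker_pointwise (hf_nonneg x) hL
      have e : L*(2*f x+4)/6 + (f x*Real.log (f x) - f x + 1)/(2*L)
          = (L/3 - 1/(2*L)) * f x + (1/(2*L)) * (f x * Real.log (f x)) + (2*L/3 + 1/(2*L)) := by
        field_simp
        ring
      linarith [e ▸ h1]
    have hi1 : Integrable (fun x => (L/3 - 1/(2*L)) * f x) ν := hf_int.const_mul _
    have hi2 : Integrable (fun x => (1/(2*L)) * (f x * Real.log (f x))) ν := hint'.const_mul _
    have hi12 : Integrable (fun x =>
        (L/3 - 1/(2*L)) * f x + (1/(2*L)) * (f x * Real.log (f x))) ν := hi1.add hi2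
    have hint2 : Integrable (fun x =>
        (L/3 - 1/(2*L)) * f x + (1/(2*L)) * (f x * Real.log (f x)) + (2*L/3 + 1/(2*L))) ν :=
      hi12.add (integrable_const _)
    have hb := integral_mono hV_int hint2 hpt
    have eA : ∫ x, ((L/3 - 1/(2*L)) * f x + (1/(2*L)) * (f x * Real.log (f x))
          + (2*L/3 + 1/(2*L))) ∂ν
        = (∫ x, ((L/3 - 1/(2*L)) * f x + (1/(2*L)) * (f x * Real.log (f x))) ∂ν)
          + ∫ x, (2*L/3 + 1/(2*L)) ∂ν :=
      integral_add hi12 (integrable_const _)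
    have eB : ∫ x, ((L/3 - 1/(2*L)) * f x + (1/(2*L)) * (f x * Real.log (f x))) ∂ν
        = (∫ x, (L/3 - 1/(2*L)) * f x ∂ν) + ∫ x, (1/(2*L)) * (f x * Real.log (f x)) ∂ν :=
      integral_add hi1 hi2
    have eC : ∫ x, (L/3 - 1/(2*L)) * f x ∂ν = (L/3 - 1/(2*L)) * ∫ x, f x ∂ν :=
      integral_const_mul _ _
    have eD : ∫ x, (1/(2*L)) * (f x * Real.log (f x)) ∂ν = (1/(2*L)) * I :=
      integral_const_mul _ _
    have eE : ∫ x, (2*L/3 + 1/(2*L)) ∂ν = 2*L/3 + 1/(2*L) := by simp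
    rw [eA, eB, eC, eD, eE, hf_one] at hb
    have e2 : (1/(2*L)) * I = I/(2*L) := by ring
    linarith
  have hV2 : V^2 ≤ 2*I := by
    rcases eq_or_lt_of_le hV_nonneg with h0 | h0
    · rw [← h0]
      simpa using by linarith
    · have hb := hVle (V/2) (by linarith)
      have e : I/(2*(V/2)) = I/V := by
        congr 1
        ring
      rw [e] at hb
      have h3 : V/2 ≤ I/V := by linarith
      rw [div_le_div_iff₀ (by linarith) h0] at h3
      nlinarith
  have htv0 : 0 ≤ tvDist μ ν := by
    apply Real.iSup_nonneg
    intro A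
    exact Real.iSup_nonneg fun _ => abs_nonneg _
  have htv_le : tvDist μ ν ≤ V := by
    rw [tvDist]
    apply Real.iSup_le _ hV_nonneg
    intro A
    apply Real.iSup_le _ hV_nonneg
    intro hA
    have hμA : (μ A).toReal = ∫ x in A, f x ∂ν :=
      (Measure.setIntegral_toReal_rnDeriv hμν A).symm
    have hνA : (ν A).toReal = ∫ x in A, (1:ℝ) ∂ν := by
      rw [setIntegral_const]
      simp
      rfl
    rw [hμA, hνA, ← integral_sub hf_int.integrableOn (integrable_const 1)]
    calc |∫ x in A, (f x - 1) ∂ν| ≤ ∫ x in A, |f x - 1| ∂ν := by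
          simpa [Real.norm_eq_abs] using
            norm_integral_le_integral_norm (μ := ν.restrict A) (fun x => f x - 1)
      _ ≤ V := setIntegral_le_integral hV_int
          (Filter.Eventually.of_forall fun x => abs_nonneg _)
  have h2 : tvDist μ ν ^ 2 ≤ 2*I :=
    le_trans (pow_le_pow_left₀ htv0 htv_le 2) hV2
  rw [klDiv, if_pos ⟨hμν, hint⟩]
  calc ENNReal.ofReal (tvDist μ ν ^ 2) ≤ ENNReal.ofReal (2*I) :=
        ENNReal.ofReal_le_ofReal h2
    _ = 2 * ENNReal.ofReal I := by
        rw [ENNReal.ofReal_mul (by norm_num)]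
        norm_num
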